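/- arXiv:1706.02526 — 9 statements merged into one kernel-verified Lean document; each statement's English description precedes it below -/
import Mathlib

section
/- Let L be a complete distributive lattice embedded (as a sublattice closed under the embedding) into a Boolean algebra B, and define the approximation ⌊ℓ⌋ = ⨆{ℓ' ∈ L | ℓ' ≤ ℓ} for ℓ ∈ B. Then for all ℓ, m ∈ B, ⌊ℓ ⊓ m⌋ = ⌊ℓ⌋ ⊓ ⌊m⌋. -/
/-- Approximation into a complete distributive sublattice `L` of a Boolean
algebra `B` commutes with binary meets: `⌊ℓ ⊓ m⌋ = ⌊ℓ⌋ ⊓ ⌊m⌋`. -/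
theorem approx_inf {B : Type*} [CompleteBooleanAlgebra B] (L : Set B)
    (hinf : ∀ x ∈ L, ∀ y ∈ L, x ⊓ y ∈ L)
    (hsup : ∀ x ∈ L, ∀ y ∈ L, x ⊔ y ∈ L)
    (hSup : ∀ S ⊆ L, sSup S ∈ L)
    (ℓ m : B) :
    sSup {x | x ∈ L ∧ x ≤ ℓ ⊓ m} = sSup {x | x ∈ L ∧ x ≤ ℓ} ⊓ sSup {x | x ∈ L ∧ x ≤ m} := by
  apply le_antisymm
  · apply sSup_le
    rintro x ⟨hxL, hx⟩
    exact le_inf (le_sSup ⟨hxL, hx.trans inf_le_left⟩)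
      (le_sSup ⟨hxL, hx.trans inf_le_right⟩)
  · rw [sSup_inf_sSup]
    apply iSup_le
    rintro ⟨a, b⟩
    apply iSup_le
    rintro ⟨⟨haL, ha⟩, ⟨hbL, hb⟩⟩
    exact le_sSup ⟨hinf a haL b hbL, inf_le_inf ha hb⟩
end

section
/- Let L be a complete distributive lattice embedded into a Boolean algebra B with approximation ⌊·⌋. If ℓ, m ∈ L, then ⌊ℓ ⊔ ¬m⌋ = (m →_L ℓ), where →_L denotes the residuum (Heyting implication) in L and ¬ is Boolean complement in B. -/
/-- For `ℓ, m ∈ L`: the approximation of `ℓ ⊔ ¬m` equals the residuum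
`m →_L ℓ = ⨆{x ∈ L | m ⊓ x ≤ ℓ}` in the lattice `L`. -/
theorem approx_sup_compl_eq_residuum {B : Type*} [CompleteBooleanAlgebra B] (L : Set B)
    (hinf : ∀ x ∈ L, ∀ y ∈ L, x ⊓ y ∈ L)
    (hsup : ∀ x ∈ L, ∀ y ∈ L, x ⊔ y ∈ L)
    (hSup : ∀ S ⊆ L, sSup S ∈ L)
    (ℓ m : B) (hℓ : ℓ ∈ L) (hm : m ∈ L) :
    sSup {x | x ∈ L ∧ x ≤ ℓ ⊔ mᶜ} = sSup {x | x ∈ L ∧ m ⊓ x ≤ ℓ} := by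
  congr 1
  ext x
  simp only [Set.mem_setOf_eq, and_congr_right_iff]
  intro _
  rw [← himp_eq, le_himp_iff, inf_comm]
end

section
/- Conditional transition systems over a finite poset (Φ, ≤) of conditions are in bijective correspondence with lattice transition systems over the lattice O(Φ) of downward-closed subsets of Φ: the maps f ↦ α with α(x,a,x') = {φ | x' ∈ f(x,a)(φ)} and α ↦ f with f(x,a)(φ) = {x' | φ ∈ α(x,a,x')} are mutually inverse, and α(x,a,x') is always downward-closed while f(x,a) is always antitone from (Φ,≤) to (P(X),⊆). -/
/-- From a CTS transition function to a LaTS transition function. -/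
def toLats {X A Φ : Type*} (f : X → A → Φ → Set X) : X → A → X → Set Φ :=
  fun x a x' => {φ | x' ∈ f x a φ}

/-- From a LaTS transition function to a CTS transition function. -/
def toCts {X A Φ : Type*} (α : X → A → X → Set Φ) : X → A → Φ → Set X :=
  fun x a φ => {x' | φ ∈ α x a x'}

/-- CTSs over a finite poset `(Φ, ≤)` correspond bijectively to LaTSs over the
lattice of downward-closed subsets of `Φ`: the two translation maps are
mutually inverse, every `α(x,a,x')` obtained from a CTS is downward-closed, and
every `f(x,a)` obtained from a LaTS is antitone from `(Φ,≤)` to `(P(X),⊆)`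
(i.e. monotone into `(P(X),⊇)`). -/
theorem cts_lats_correspondence {X A Φ : Type*} [PartialOrder Φ] [Fintype Φ] :
    (∀ f : X → A → Φ → Set X, (∀ x a, Antitone (f x a)) →
      (∀ x a x', IsLowerSet (toLats f x a x')) ∧ toCts (toLats f) = f) ∧
    (∀ α : X → A → X → Set Φ, (∀ x a x', IsLowerSet (α x a x')) →
      (∀ x a, Antitone (toCts α x a)) ∧ toLats (toCts α) = α) := by
  constructor
  · intro f hf
    refine ⟨fun x a x' φ ψ hle hφ => hf x a hle hφ, rfl⟩
  · intro α hα
    refine ⟨fun x a φ ψ hle x' hx' => hα x a x' hle hx', rfl⟩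
end

section
/- A conditional relation R : X × Y → L is a lattice bisimulation between two finite LaTSs if and only if R ≤ F(R), where F(R)(x,y) = F₁(R)(x,y) ⊓ F₂(R)(x,y), F₁(R)(x,y) = ⨅_{a,x'} (α(x,a,x') → ⨆_{y'} (β(y,a,y') ⊓ R(x',y'))), and F₂ is symmetric with α,β and x,y swapped; here → is the Heyting residuum in L. -/
/-- `R` is a lattice bisimulation between the LaTSs `α` and `β`. -/
def IsLatticeBisim {X Y A L : Type*} [Lattice L]
    (α : X → A → X → L) (β : Y → A → Y → L) (R : X → Y → L) : Prop :=
  ∀ ℓ : L, SupIrred ℓ →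
    (∀ x x' y a, ℓ ≤ α x a x' → ℓ ≤ R x y → ∃ y', ℓ ≤ β y a y' ∧ ℓ ≤ R x' y') ∧
    (∀ x y y' a, ℓ ≤ β y a y' → ℓ ≤ R x y → ∃ x', ℓ ≤ α x a x' ∧ ℓ ≤ R x' y')

/-- The fixpoint operator `F(R) = F₁(R) ⊓ F₂(R)`, where `⇨` is the Heyting
residuum of `L`. -/
def Fop {X Y A L : Type*} [Fintype X] [Fintype Y] [Fintype A] [HeytingAlgebra L]
    (α : X → A → X → L) (β : Y → A → Y → L) (R : X → Y → L) : X → Y → L :=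
  fun x y =>
    (Finset.univ.inf fun p : A × X =>
      α x p.1 p.2 ⇨ Finset.univ.sup fun y' : Y => β y p.1 y' ⊓ R p.2 y') ⊓
    (Finset.univ.inf fun p : A × Y =>
      β y p.1 p.2 ⇨ Finset.univ.sup fun x' : X => α x p.1 x' ⊓ R x' p.2)

/-- In a finite lattice, `a ≤ b` iff every sup-irreducible below `a` is below `b`. -/
lemma le_iff_supIrred_le {L : Type*} [Lattice L] [OrderBot L] [Fintype L] {a b : L} :
    a ≤ b ↔ ∀ ℓ : L, SupIrred ℓ → ℓ ≤ a → ℓ ≤ b := by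
  constructor
  · exact fun h ℓ _ hℓ => hℓ.trans h
  · intro h
    obtain ⟨s, rfl, hs⟩ := exists_supIrred_decomposition a
    exact Finset.sup_le fun c hc => h c (hs hc) (Finset.le_sup (f := id) hc)

/-- A conditional relation is a lattice bisimulation iff it is a post-fixpoint
of `F`. -/
theorem isLatticeBisim_iff_le_Fop {X Y A L : Type*}
    [Fintype X] [Fintype Y] [Fintype A] [HeytingAlgebra L] [Fintype L]
    (α : X → A → X → L) (β : Y → A → Y → L) (R : X → Y → L) :
    IsLatticeBisim α β R ↔ ∀ x y, R x y ≤ Fop α β R x y := by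
  constructor
  · intro h x y
    refine le_inf (Finset.le_inf fun p _ => ?_) (Finset.le_inf fun p _ => ?_)
    · rw [le_himp_iff, le_iff_supIrred_le]
      intro ℓ hℓ hle
      obtain ⟨y', hβ, hR⟩ := (h ℓ hℓ).1 x p.2 y p.1 (hle.trans inf_le_right)
        (hle.trans inf_le_left)
      exact le_trans (le_inf hβ hR) (Finset.le_sup (f := fun y' : Y => β y p.1 y' ⊓ R p.2 y') (Finset.mem_univ y'))
    · rw [le_himp_iff, le_iff_supIrred_le]
      intro ℓ hℓ hle
      obtain ⟨x', hα, hR⟩ := (h ℓ hℓ).2 x y p.2 p.1 (hle.trans inf_le_right)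
        (hle.trans inf_le_left)
      exact le_trans (le_inf hα hR) (Finset.le_sup (f := fun x' : X => α x p.1 x' ⊓ R x' p.2) (Finset.mem_univ x'))
  · intro h ℓ hℓ
    constructor
    · intro x x' y a hα hR
      have h1 : ℓ ≤ α x a x' ⇨ Finset.univ.sup fun y' : Y => β y a y' ⊓ R x' y' :=
        (hR.trans (h x y)).trans (inf_le_left.trans
          (Finset.inf_le (Finset.mem_univ (a, x'))))
      have h2 : ℓ ≤ Finset.univ.sup fun y' : Y => β y a y' ⊓ R x' y' :=
        le_trans (le_inf le_rfl hα) (le_himp_iff.mp h1)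
      obtain ⟨y', _, hy'⟩ := hℓ.supPrime.le_finset_sup.mp h2
      exact ⟨y', hy'.trans inf_le_left, hy'.trans inf_le_right⟩
    · intro x y y' a hβ hR
      have h1 : ℓ ≤ β y a y' ⇨ Finset.univ.sup fun x' : X => α x a x' ⊓ R x' y' :=
        (hR.trans (h x y)).trans (inf_le_right.trans
          (Finset.inf_le (Finset.mem_univ (a, y'))))
      have h2 : ℓ ≤ Finset.univ.sup fun x' : X => α x a x' ⊓ R x' y' :=
        le_trans (le_inf le_rfl hβ) (le_himp_iff.mp h1)
      obtain ⟨x', _, hx'⟩ := hℓ.supPrime.le_finset_sup.mp h2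
      exact ⟨x', hx'.trans inf_le_left, hx'.trans inf_le_right⟩
end

section
/- Let L be a finite distributive lattice embedded into the Boolean algebra B of subsets of its join-irreducibles, and let R : X×Y → L. Then ⌊F_B(R)⌋ = F_L(R), where F_B and F_L denote the fixpoint operator F computed using the residuum of B and of L respectively, and ⌊·⌋ denotes pointwise approximation into L. -/
/-- Approximation of `b ∈ B` into the sublattice `L`. -/
def approx {B : Type*} [CompleteBooleanAlgebra B] (L : Set B) (b : B) : B :=
  sSup {x | x ∈ L ∧ x ≤ b}

/-- Residuum in the sublattice `L`: `m →_L ℓ = ⨆{x ∈ L | m ⊓ x ≤ ℓ}`. -/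
def resL {B : Type*} [CompleteBooleanAlgebra B] (L : Set B) (m l : B) : B :=
  sSup {x | x ∈ L ∧ m ⊓ x ≤ l}

/-- The operator `F` computed with the Boolean residuum `m →_B ℓ = ¬m ⊔ ℓ`. -/
def FB {X Y A B : Type*} [CompleteBooleanAlgebra B]
    (α : X → A → X → B) (β : Y → A → Y → B) (R : X → Y → B) : X → Y → B :=
  fun x y =>
    (⨅ a, ⨅ x', (α x a x')ᶜ ⊔ ⨆ y', β y a y' ⊓ R x' y') ⊓
    (⨅ a, ⨅ y', (β y a y')ᶜ ⊔ ⨆ x', α x a x' ⊓ R x' y')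

/-- The operator `F` computed with the residuum of the sublattice `L`. -/
def FL {X Y A B : Type*} [CompleteBooleanAlgebra B] (L : Set B)
    (α : X → A → X → B) (β : Y → A → Y → B) (R : X → Y → B) : X → Y → B :=
  fun x y =>
    (⨅ a, ⨅ x', resL L (α x a x') (⨆ y', β y a y' ⊓ R x' y')) ⊓
    (⨅ a, ⨅ y', resL L (β y a y') (⨆ x', α x a x' ⊓ R x' y'))


section Aux
variable {B : Type*} [CompleteBooleanAlgebra B] {L : Set B}

lemma approx_mem (hSup : ∀ S ⊆ L, sSup S ∈ L) (b : B) : approx L b ∈ L :=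
  hSup _ (fun x hx => hx.1)

lemma approx_le (b : B) : approx L b ≤ b :=
  sSup_le (fun _ hx => hx.2)

lemma le_approx {x b : B} (hx : x ∈ L) (h : x ≤ b) : x ≤ approx L b :=
  le_sSup ⟨hx, h⟩

lemma resL_eq_approx (m l : B) : resL L m l = approx L (mᶜ ⊔ l) := by
  unfold resL approx
  congr 1
  ext x
  simp only [Set.mem_setOf_eq, and_congr_right_iff]
  intro _
  rw [sup_comm, ← himp_eq, le_himp_iff, inf_comm]

lemma approx_inf_s11 (hinf : ∀ x ∈ L, ∀ y ∈ L, x ⊓ y ∈ L)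
    (hSup : ∀ S ⊆ L, sSup S ∈ L) (a b : B) :
    approx L (a ⊓ b) = approx L a ⊓ approx L b := by
  refine le_antisymm (le_inf ?_ ?_) ?_
  · exact le_approx (approx_mem hSup _) ((approx_le _).trans inf_le_left)
  · exact le_approx (approx_mem hSup _) ((approx_le _).trans inf_le_right)
  · exact le_approx (hinf _ (approx_mem hSup a) _ (approx_mem hSup b))
      (inf_le_inf (approx_le a) (approx_le b))

lemma approx_iInf {ι : Sort*} (hSup : ∀ S ⊆ L, sSup S ∈ L)
    (hInf : ∀ S ⊆ L, sInf S ∈ L) (f : ι → B) :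
    approx L (⨅ i, f i) = ⨅ i, approx L (f i) := by
  refine le_antisymm (le_iInf fun i => le_approx (approx_mem hSup _)
    ((approx_le _).trans (iInf_le _ i))) ?_
  refine le_approx ?_ (le_iInf fun i => (iInf_le _ i).trans (approx_le _))
  have : (⨅ i, approx L (f i)) = sInf (Set.range fun i => approx L (f i)) := by
    rw [sInf_range]
  rw [this]
  exact hInf _ (by rintro x ⟨i, rfl⟩; exact approx_mem hSup _)

end Aux

/-- For a conditional relation `R` with values in the sublattice `L`, the
approximation of `F_B(R)` equals `F_L(R)`. -/
theorem approx_FB_eq_FL {X Y A B : Type*} [CompleteBooleanAlgebra B] (L : Set B)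
    (hinf : ∀ x ∈ L, ∀ y ∈ L, x ⊓ y ∈ L)
    (hsup : ∀ x ∈ L, ∀ y ∈ L, x ⊔ y ∈ L)
    (hSup : ∀ S ⊆ L, sSup S ∈ L)
    (hInf : ∀ S ⊆ L, sInf S ∈ L)
    (α : X → A → X → B) (β : Y → A → Y → B) (R : X → Y → B)
    (hα : ∀ x a x', α x a x' ∈ L) (hβ : ∀ y a y', β y a y' ∈ L)
    (hR : ∀ x y, R x y ∈ L) :
    ∀ x y, approx L (FB α β R x y) = FL L α β R x y := by
  intro x y
  unfold FB FL
  rw [approx_inf_s11 hinf hSup, approx_iInf hSup hInf, approx_iInf hSup hInf]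
  congr 1
  · refine iInf_congr fun a => ?_
    rw [approx_iInf hSup hInf]
    exact iInf_congr fun x' => (resL_eq_approx _ _).symm
  · refine iInf_congr fun a => ?_
    rw [approx_iInf hSup hInf]
    exact iInf_congr fun y' => (resL_eq_approx _ _).symm
end

section
/- Every L-bisimulation is also a B-bisimulation: if R : X×Y → L satisfies R ≤ F_L(R), then R ≤ F_B(R), where L is a finite distributive lattice embedded into Boolean algebra B and F_L, F_B are the respective fixpoint operators. -/
lemma resL_le_compl_sup {B : Type*} [CompleteBooleanAlgebra B] (L : Set B) (m l : B) :
    resL L m l ≤ mᶜ ⊔ l := by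
  apply sSup_le
  rintro x ⟨-, hx⟩
  calc x = x ⊓ (mᶜ ⊔ m) := by simp
    _ = (x ⊓ mᶜ) ⊔ (x ⊓ m) := inf_sup_left x mᶜ m
    _ ≤ mᶜ ⊔ l := sup_le_sup inf_le_right (le_trans (inf_comm x m ▸ le_rfl) hx)

/-- Every `L`-bisimulation is also a `B`-bisimulation: if `R ≤ F_L(R)` then
`R ≤ F_B(R)`. -/
theorem L_bisim_is_B_bisim {X Y A B : Type*} [CompleteBooleanAlgebra B] (L : Set B)
    (hinf : ∀ x ∈ L, ∀ y ∈ L, x ⊓ y ∈ L)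
    (hsup : ∀ x ∈ L, ∀ y ∈ L, x ⊔ y ∈ L)
    (hSup : ∀ S ⊆ L, sSup S ∈ L)
    (hInf : ∀ S ⊆ L, sInf S ∈ L)
    (α : X → A → X → B) (β : Y → A → Y → B) (R : X → Y → B)
    (hα : ∀ x a x', α x a x' ∈ L) (hβ : ∀ y a y', β y a y' ∈ L)
    (hR : ∀ x y, R x y ∈ L)
    (h : ∀ x y, R x y ≤ FL L α β R x y) :
    ∀ x y, R x y ≤ FB α β R x y := by
  intro x y
  refine (h x y).trans (inf_le_inf ?_ ?_) <;>
  · exact iInf_mono fun a => iInf_mono fun z => resL_le_compl_sup L _ _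
end

section
/- If R : X×Y → B is a B-bisimulation (R ≤ F_B(R)) all of whose entries lie in the sublattice L, then R is an L-bisimulation (R ≤ F_L(R)). -/
/-- A `B`-bisimulation all of whose entries lie in `L` is an
`L`-bisimulation. -/
theorem B_bisim_with_entries_in_L_is_L_bisim {X Y A B : Type*}
    [CompleteBooleanAlgebra B] (L : Set B)
    (hinf : ∀ x ∈ L, ∀ y ∈ L, x ⊓ y ∈ L)
    (hsup : ∀ x ∈ L, ∀ y ∈ L, x ⊔ y ∈ L)
    (hSup : ∀ S ⊆ L, sSup S ∈ L)
    (hInf : ∀ S ⊆ L, sInf S ∈ L)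
    (α : X → A → X → B) (β : Y → A → Y → B) (R : X → Y → B)
    (hα : ∀ x a x', α x a x' ∈ L) (hβ : ∀ y a y', β y a y' ∈ L)
    (hR : ∀ x y, R x y ∈ L)
    (h : ∀ x y, R x y ≤ FB α β R x y) :
    ∀ x y, R x y ≤ FL L α β R x y := by
  intro x y
  have h1 := (h x y).trans inf_le_left
  have h2 := (h x y).trans inf_le_right
  refine le_inf (le_iInf fun a => le_iInf fun x' => ?_) (le_iInf fun a => le_iInf fun y' => ?_)
  · refine le_sSup ⟨hR x y, ?_⟩
    have hb : R x y ≤ (α x a x')ᶜ ⊔ ⨆ y', β y a y' ⊓ R x' y' :=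
      h1.trans ((iInf_le _ a).trans (iInf_le _ x'))
    calc α x a x' ⊓ R x y ≤ α x a x' ⊓ ((α x a x')ᶜ ⊔ ⨆ y', β y a y' ⊓ R x' y') :=
          inf_le_inf_left _ hb
      _ ≤ _ := by rw [inf_sup_left]; simp
  · refine le_sSup ⟨hR x y, ?_⟩
    have hb : R x y ≤ (β y a y')ᶜ ⊔ ⨆ x', α x a x' ⊓ R x' y' :=
      h2.trans ((iInf_le _ a).trans (iInf_le _ y'))
    calc β y a y' ⊓ R x y ≤ β y a y' ⊓ ((β y a y')ᶜ ⊔ ⨆ x', α x a x' ⊓ R x' y') :=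
          inf_le_inf_left _ hb
      _ ≤ _ := by rw [inf_sup_left]; simp
end

section
/- For a conditional relation R between LaTSs (X,A,α) and (Y,A,β) over a finite distributive lattice, F(R) = ⨅_{a∈A} ((α_a ⊗ (R · β_aᵀ)) ⊓ (β_a ⊗ (α_a · R)ᵀ)ᵀ), where · is matrix multiplication over (⊔,⊓), U ⊗ V is defined by (U⊗V)(x,z) = ⨅_y (U(x,y) → V(y,z)) with → the Heyting residuum, and ᵀ is transposition. -/
/-- Standard matrix multiplication over a lattice, using `⊔` for addition and
`⊓` for multiplication. -/
def mmul {X Y Z L : Type*} [Fintype Y] [Lattice L] [OrderBot L]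
    (U : X → Y → L) (V : Y → Z → L) : X → Z → L :=
  fun x z => Finset.univ.sup fun y => U x y ⊓ V y z

/-- Residuated matrix multiplication: `(U ⊗ V)(x,z) = ⨅_y (U(x,y) ⇨ V(y,z))`. -/
def omul {X Y Z L : Type*} [Fintype Y] [HeytingAlgebra L]
    (U : X → Y → L) (V : Y → Z → L) : X → Z → L :=
  fun x z => Finset.univ.inf fun y => U x y ⇨ V y z

/-- Matrix transposition. -/
def tr {X Y L : Type*} (M : X → Y → L) : Y → X → L := fun y x => M x y

/-- `F(R) = ⨅_a ((α_a ⊗ (R · β_aᵀ)) ⊓ (β_a ⊗ (α_a · R)ᵀ)ᵀ)`. -/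
theorem Fop_eq_matrix_form {X Y A L : Type*}
    [Fintype X] [Fintype Y] [Fintype A] [HeytingAlgebra L] [Fintype L]
    (α : X → A → X → L) (β : Y → A → Y → L) (R : X → Y → L) :
    ∀ x y, Fop α β R x y =
      Finset.univ.inf fun a : A =>
        omul (fun x x' => α x a x') (mmul R (tr (fun y y' => β y a y'))) x y ⊓
        tr (omul (fun y y' => β y a y') (tr (mmul (fun x x' => α x a x') R))) x y := by

  intro x y
  unfold Fop omul mmul tr
  rw [← Finset.univ_product_univ, Finset.inf_product_left,
      ← Finset.univ_product_univ, Finset.inf_product_left]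
  refine Eq.trans ?_ Finset.inf_inf.symm
  congr 1
  exact Finset.inf_congr rfl fun a _ => Finset.inf_congr rfl fun z _ =>
    congrArg _ (Finset.sup_congr rfl fun w _ => inf_comm _ _)
end

section
/- Let (X, α) be a LaTS over an atomic complete Boolean algebra B (with a singleton alphabet, so α : X×X → B, X finite). A conditional relation R : X×X → B is a lattice bisimulation for α if and only if R·α ≤ α·R and Rᵀ·α ≤ α·Rᵀ, where · is matrix multiplication over (⊔,⊓). -/
private theorem atom_le_finsup {X B : Type*} [Fintype X]
    [CompleteAtomicBooleanAlgebra B] {ℓ : B} (hℓ : IsAtom ℓ) (f : X → B) :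
    ℓ ≤ Finset.univ.sup f ↔ ∃ y, ℓ ≤ f y := by
  rw [Finset.sup_eq_iSup, hℓ.le_iSup]
  simp [hℓ.le_iSup]

/-- Fitting's characterisation: over an atomic complete Boolean algebra (with a
singleton alphabet), `R` is a lattice bisimulation for `α` iff
`R·α ≤ α·R` and `Rᵀ·α ≤ α·Rᵀ`. -/
theorem fitting_characterisation {X B : Type*} [Fintype X]
    [CompleteAtomicBooleanAlgebra B] (α R : X → X → B) :
    (∀ ℓ : B, IsAtom ℓ →
      (∀ x y x', ℓ ≤ α x y → ℓ ≤ R x x' → ∃ y', ℓ ≤ α x' y' ∧ ℓ ≤ R y y') ∧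
      (∀ x y x', ℓ ≤ α x y → ℓ ≤ R x' x → ∃ y', ℓ ≤ α x' y' ∧ ℓ ≤ R y' y)) ↔
    ((∀ x z, (Finset.univ.sup fun y => R x y ⊓ α y z) ≤
        Finset.univ.sup fun y => α x y ⊓ R y z) ∧
     (∀ x z, (Finset.univ.sup fun y => R y x ⊓ α y z) ≤
        Finset.univ.sup fun y => α x y ⊓ R z y)) := by
  constructor
  · intro h
    constructor
    · intro x z
      rw [le_iff_atom_le_imp]
      intro ℓ hℓ hle
      obtain ⟨y, hy⟩ := (atom_le_finsup hℓ _).1 hle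
      obtain ⟨y', h1, h2⟩ := (h ℓ hℓ).2 y z x (le_inf_iff.1 hy).2 (le_inf_iff.1 hy).1
      exact (atom_le_finsup hℓ _).2 ⟨y', le_inf h1 h2⟩
    · intro x z
      rw [le_iff_atom_le_imp]
      intro ℓ hℓ hle
      obtain ⟨y, hy⟩ := (atom_le_finsup hℓ _).1 hle
      obtain ⟨y', h1, h2⟩ := (h ℓ hℓ).1 y z x (le_inf_iff.1 hy).2 (le_inf_iff.1 hy).1
      exact (atom_le_finsup hℓ _).2 ⟨y', le_inf h1 h2⟩
  · intro ⟨h1, h2⟩ ℓ hℓ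
    constructor
    · intro x y x' hα hR
      have : ℓ ≤ Finset.univ.sup fun w => R w x' ⊓ α w y :=
        (atom_le_finsup hℓ _).2 ⟨x, le_inf hR hα⟩
      obtain ⟨y', hy'⟩ := (atom_le_finsup hℓ _).1 (this.trans (h2 x' y))
      exact ⟨y', (le_inf_iff.1 hy').1, (le_inf_iff.1 hy').2⟩
    · intro x y x' hα hR
      have : ℓ ≤ Finset.univ.sup fun w => R x' w ⊓ α w y :=
        (atom_le_finsup hℓ _).2 ⟨x, le_inf hR hα⟩
      obtain ⟨y', hy'⟩ := (atom_le_finsup hℓ _).1 (this.trans (h1 x' y))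
      exact ⟨y', (le_inf_iff.1 hy').1, (le_inf_iff.1 hy').2⟩
end
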